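/- Let d ≥ 2 and q₁,…,q_d ≥ 2 be integers such that for every index i ∈ {1,…,d} there exists j ≠ i with q_j = q_i. Then there exists t ∈ ℝ^d with Q̂(t) = −1/(d−1); since Q̂ ≥ −1/(d−1) everywhere, the minimum of Q̂ equals −1/(d−1). -/

import Mathlib

open Finset Real

/-- `Q̂(t) = (1/D)·Σ_{i≠j} √(q_i q_j)·cos(t_i − t_j)`, where `D = (d−1)(q₁+⋯+q_d)`. -/
noncomputable def Qhat (d : ℕ) (q : Fin d → ℕ) (t : Fin d → ℝ) : ℝ :=
  (1 / (((d : ℝ) - 1) * ∑ j, (q j : ℝ))) *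
    ∑ p ∈ Finset.univ.offDiag,
      Real.sqrt ((q p.1 : ℝ) * (q p.2 : ℝ)) * Real.cos (t p.1 - t p.2)

private lemma sum_rank {M : Type*} [AddCommMonoid M] {α : Type*} [LinearOrder α]
    (s : Finset α) (f : ℕ → M) :
    ∑ j ∈ s, f ((s.filter (fun a => a < j)).card) = ∑ k ∈ Finset.range s.card, f k := by
  classical
  set r : α → ℕ := fun j => (s.filter (fun a => a < j)).card with hr
  have hmem : ∀ j ∈ s, r j < s.card := by
    intro j hj
    apply Finset.card_lt_card
    refine ⟨Finset.filter_subset _ _, fun hsub => ?_⟩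
    have := hsub hj
    simp at this
  have hmono : ∀ x ∈ s, ∀ y ∈ s, x < y → r x < r y := by
    intro x hx y hy hxy
    apply Finset.card_lt_card
    constructor
    · intro a ha
      simp only [Finset.mem_filter] at ha ⊢
      exact ⟨ha.1, lt_trans ha.2 hxy⟩
    · intro hsub
      have hx' : x ∈ s.filter (fun a => a < y) := by simp [hx, hxy]
      have := hsub hx'
      simp at this
  have hinj : ∀ x ∈ s, ∀ y ∈ s, r x = r y → x = y := by
    intro x hx y hy hxy
    rcases lt_trichotomy x y with h | h | h
    · exact absurd hxy (Nat.ne_of_lt (hmono x hx y hy h))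
    · exact h
    · exact absurd hxy.symm (Nat.ne_of_lt (hmono y hy x hx h))
  have himg : s.image r = Finset.range s.card := by
    apply Finset.eq_of_subset_of_card_le
    · intro k hk
      simp only [Finset.mem_image] at hk
      obtain ⟨j, hj, rfl⟩ := hk
      exact Finset.mem_range.2 (hmem j hj)
    · rw [Finset.card_range, Finset.card_image_of_injOn (fun x hx y hy => hinj x hx y hy)]
  rw [← himg, Finset.sum_image hinj]

private lemma exp_sum_zero (m : ℕ) (hm : 2 ≤ m) :
    ∑ k ∈ Finset.range m, Complex.exp (2 * Real.pi * Complex.I * k / m) = 0 := by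
  have hζ : IsPrimitiveRoot (Complex.exp (2 * Real.pi * Complex.I / m)) m :=
    Complex.isPrimitiveRoot_exp m (by omega)
  have h0 := hζ.geom_sum_eq_zero (by omega)
  rw [← h0]
  refine Finset.sum_congr rfl fun k _ => ?_
  rw [← Complex.exp_nat_mul]
  congr 1
  have hm0 : (m : ℂ) ≠ 0 := by exact_mod_cast (by omega : m ≠ 0)
  field_simp

private lemma cos_sum_zero (m : ℕ) (hm : 2 ≤ m) :
    ∑ k ∈ Finset.range m, Real.cos (2 * Real.pi * k / m) = 0 := by
  have h := congrArg Complex.re (exp_sum_zero m hm)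
  rw [Complex.re_sum] at h
  have he : ∀ k ∈ Finset.range m,
      (Complex.exp (2 * Real.pi * Complex.I * k / m)).re = Real.cos (2 * Real.pi * k / m) := by
    intro k _
    rw [show (2 * Real.pi * Complex.I * k / m : ℂ)
        = ((2 * Real.pi * k / m : ℝ) : ℂ) * Complex.I by push_cast; ring,
      Complex.exp_ofReal_mul_I_re]
  rw [Finset.sum_congr rfl he] at h
  simpa using h

private lemma sin_sum_zero (m : ℕ) (hm : 2 ≤ m) :
    ∑ k ∈ Finset.range m, Real.sin (2 * Real.pi * k / m) = 0 := by
  have h := congrArg Complex.im (exp_sum_zero m hm)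
  rw [Complex.im_sum] at h
  have he : ∀ k ∈ Finset.range m,
      (Complex.exp (2 * Real.pi * Complex.I * k / m)).im = Real.sin (2 * Real.pi * k / m) := by
    intro k _
    rw [show (2 * Real.pi * Complex.I * k / m : ℂ)
        = ((2 * Real.pi * k / m : ℝ) : ℂ) * Complex.I by push_cast; ring,
      Complex.exp_ofReal_mul_I_im]
  rw [Finset.sum_congr rfl he] at h
  simpa using h

private lemma qhat_eq (d : ℕ) (q : Fin d → ℕ) (t : Fin d → ℝ) :
    Qhat d q t =
      ((∑ j, Real.sqrt (q j) * Real.cos (t j)) ^ 2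
        + (∑ j, Real.sqrt (q j) * Real.sin (t j)) ^ 2
        - ∑ j, (q j : ℝ)) / (((d : ℝ) - 1) * ∑ j, (q j : ℝ)) := by
  rw [Qhat, one_div, inv_mul_eq_div]
  congr 1
  have hsq : ∀ p : Fin d × Fin d,
      Real.sqrt ((q p.1 : ℝ) * (q p.2 : ℝ)) * Real.cos (t p.1 - t p.2)
        = (Real.sqrt (q p.1) * Real.cos (t p.1)) * (Real.sqrt (q p.2) * Real.cos (t p.2))
          + (Real.sqrt (q p.1) * Real.sin (t p.1)) * (Real.sqrt (q p.2) * Real.sin (t p.2)) := by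
    intro p
    rw [Real.cos_sub, Real.sqrt_mul (by positivity)]
    ring
  have hfull : ∑ p ∈ Finset.univ ×ˢ Finset.univ,
      (Real.sqrt ((q p.1 : ℝ) * (q p.2 : ℝ)) * Real.cos (t p.1 - t p.2))
      = (∑ j, Real.sqrt (q j) * Real.cos (t j)) ^ 2
        + (∑ j, Real.sqrt (q j) * Real.sin (t j)) ^ 2 := by
    rw [sq, sq, Finset.sum_mul_sum, Finset.sum_mul_sum, ← Finset.sum_add_distrib,
      Finset.sum_product]
    refine Finset.sum_congr rfl fun i _ => ?_
    rw [← Finset.sum_add_distrib]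
    exact Finset.sum_congr rfl fun j _ => hsq (i, j)
  have hdiag : ∑ p ∈ (Finset.univ : Finset (Fin d)).diag,
      (Real.sqrt ((q p.1 : ℝ) * (q p.2 : ℝ)) * Real.cos (t p.1 - t p.2))
      = ∑ j, (q j : ℝ) := by
    rw [Finset.sum_diag]
    refine Finset.sum_congr rfl fun i _ => ?_
    simp only [sub_self, Real.cos_zero, mul_one]
    exact Real.sqrt_mul_self (by positivity)
  have hsplit : ∑ p ∈ (Finset.univ : Finset (Fin d)).diag,
        (Real.sqrt ((q p.1 : ℝ) * (q p.2 : ℝ)) * Real.cos (t p.1 - t p.2))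
      + ∑ p ∈ (Finset.univ : Finset (Fin d)).offDiag,
        (Real.sqrt ((q p.1 : ℝ) * (q p.2 : ℝ)) * Real.cos (t p.1 - t p.2))
      = ∑ p ∈ Finset.univ ×ˢ Finset.univ,
        (Real.sqrt ((q p.1 : ℝ) * (q p.2 : ℝ)) * Real.cos (t p.1 - t p.2)) := by
    rw [← Finset.sum_union (Finset.disjoint_diag_offDiag _), Finset.diag_union_offDiag]
  rw [hfull, hdiag] at *
  linarith [hsplit]

theorem Qhat_min_attained (d : ℕ) (hd : 2 ≤ d) (q : Fin d → ℕ) (hq : ∀ j, 2 ≤ q j)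
    (hpair : ∀ i : Fin d, ∃ j : Fin d, j ≠ i ∧ q j = q i) :
    (∃ t : Fin d → ℝ, Qhat d q t = -(1 / ((d : ℝ) - 1))) ∧
    (∀ t : Fin d → ℝ, -(1 / ((d : ℝ) - 1)) ≤ Qhat d q t) := by
  have hne : Nonempty (Fin d) := ⟨⟨0, by omega⟩⟩
  have hQs : (0 : ℝ) < ∑ j, (q j : ℝ) := by
    refine Finset.sum_pos (fun j _ => ?_) Finset.univ_nonempty
    have := hq j
    exact_mod_cast (by omega : 0 < q j)
  have hd1 : (0 : ℝ) < (d : ℝ) - 1 := by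
    have : (2 : ℝ) ≤ (d : ℝ) := by exact_mod_cast hd
    linarith
  have hD : (0 : ℝ) < ((d : ℝ) - 1) * ∑ j, (q j : ℝ) := mul_pos hd1 hQs
  constructor
  · -- attainment
    set t : Fin d → ℝ := fun i =>
      2 * Real.pi * ((Finset.univ.filter (fun a => q a = q i)).filter (fun a => a < i)).card
        / ((Finset.univ.filter (fun a => q a = q i)).card) with ht
    refine ⟨t, ?_⟩
    have key : ∀ g : ℝ → ℝ,
        (∀ m : ℕ, 2 ≤ m → ∑ k ∈ Finset.range m, g (2 * Real.pi * k / m) = 0) →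
        ∑ j, Real.sqrt (q j) * g (t j) = 0 := by
      intro g hg
      rw [← Finset.sum_fiberwise_of_maps_to
        (fun x _ => Finset.mem_image_of_mem q (Finset.mem_univ x))
        (fun j => Real.sqrt (q j) * g (t j))]
      apply Finset.sum_eq_zero
      intro v hv
      set fiber := Finset.univ.filter (fun a => q a = v) with hfiber
      have hm : 2 ≤ fiber.card := by
        obtain ⟨i, _, hi⟩ := Finset.mem_image.1 hv
        obtain ⟨j, hji, hqj⟩ := hpair i
        refine Finset.one_lt_card.2 ⟨j, ?_, i, ?_, hji⟩
        · simp [hfiber, hqj, hi]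
        · simp [hfiber, hi]
      have hstep : ∀ j ∈ fiber, Real.sqrt (q j) * g (t j)
          = Real.sqrt v * g (2 * Real.pi * ((fiber.filter (fun a => a < j)).card) / fiber.card) := by
        intro j hj
        have hqj : q j = v := (Finset.mem_filter.1 hj).2
        have hcl : Finset.univ.filter (fun a => q a = q j) = fiber := by
          simp only [hqj, hfiber]
        rw [ht]
        simp only [hcl, hqj]
        rfl
      rw [Finset.sum_congr rfl hstep, ← Finset.mul_sum,
        sum_rank fiber (fun k => g (2 * Real.pi * k / fiber.card)), hg _ hm, mul_zero]
    have hC := key Real.cos cos_sum_zero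
    have hS := key Real.sin sin_sum_zero
    rw [qhat_eq, hC, hS]
    field_simp
    ring
  · intro t
    rw [qhat_eq]
    have hA : (0 : ℝ) ≤ (∑ j, Real.sqrt (q j) * Real.cos (t j)) ^ 2
        + (∑ j, Real.sqrt (q j) * Real.sin (t j)) ^ 2 := by positivity
    have heq : -(1 / ((d : ℝ) - 1)) = (0 - ∑ j, (q j : ℝ)) / (((d : ℝ) - 1) * ∑ j, (q j : ℝ)) := by
      field_simp
      ring
    rw [heq]
    exact div_le_div_of_nonneg_right (by linarith) hD.le
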